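/- If a sequent Γ ⇒ Δ is provable in Grz_∞, then for every finite set of formulas Λ the sequent Λ*, Γ ⇒ Δ is provable in Grz_Seq, where Λ* = {□(A → □A) : A ∈ Λ}. -/

import Mathlib

/-- Modal formulas built from ⊥ and propositional variables using → and □. -/
inductive Fml : Type
  | bot : Fml
  | var : ℕ → Fml
  | imp : Fml → Fml → Fml
  | box : Fml → Fml
deriving DecidableEq

/-- A sequent `Γ ⇒ Δ`: a pair of finite multisets of formulas. -/
abbrev Sequent : Type := Multiset Fml × Multiset Fml

/-- The sequent calculus `Grz_Seq` (with the cut rule available when the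
Boolean parameter is `true`, i.e. `GrzSeq true` is `Grz_Seq + cut` and
`GrzSeq false` is `Grz_Seq`). -/
inductive GrzSeq : Bool → Sequent → Prop
  | ax (c : Bool) (Γ Δ : Multiset Fml) (A : Fml) :
      GrzSeq c (A ::ₘ Γ, A ::ₘ Δ)
  | axBot (c : Bool) (Γ Δ : Multiset Fml) :
      GrzSeq c (Fml.bot ::ₘ Γ, Δ)
  | impL {c : Bool} {Γ Δ : Multiset Fml} {A B : Fml} :
      GrzSeq c (B ::ₘ Γ, Δ) → GrzSeq c (Γ, A ::ₘ Δ) →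
      GrzSeq c (Fml.imp A B ::ₘ Γ, Δ)
  | impR {c : Bool} {Γ Δ : Multiset Fml} {A B : Fml} :
      GrzSeq c (A ::ₘ Γ, B ::ₘ Δ) → GrzSeq c (Γ, Fml.imp A B ::ₘ Δ)
  | refl {c : Bool} {Γ Δ : Multiset Fml} {B : Fml} :
      GrzSeq c (B ::ₘ Fml.box B ::ₘ Γ, Δ) → GrzSeq c (Fml.box B ::ₘ Γ, Δ)
  | boxGrz {c : Bool} (Γ : Multiset Fml) {Φ : Multiset Fml} {A : Fml} (Δ : Multiset Fml) :
      GrzSeq c (Fml.box (Fml.imp A (Fml.box A)) ::ₘ Φ.map Fml.box, ({A} : Multiset Fml)) →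
      GrzSeq c (Γ + Φ.map Fml.box, Fml.box A ::ₘ Δ)
  | cut {Γ Δ : Multiset Fml} {A : Fml} :
      GrzSeq true (Γ, A ::ₘ Δ) → GrzSeq true (A ::ₘ Γ, Δ) → GrzSeq true (Γ, Δ)

/-- Tags for the inference rules of `Grz_∞ (+ cut)`. -/
inductive RuleTag : Type
  | ax | axBot | impL | impR | refl | box | cut
deriving DecidableEq

/-- Local correctness of a rule application in `Grz_∞` (cut allowed when the
Boolean parameter is `true`): it relates the conclusion sequent, the rule tag
and the (optional) first and second premises.  For the rule `(□)`, the second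
premise is its right premise. -/
inductive Rules : Bool → Sequent → RuleTag → Option Sequent → Option Sequent → Prop
  | ax (c : Bool) (Γ Δ : Multiset Fml) (p : ℕ) :
      Rules c (Fml.var p ::ₘ Γ, Fml.var p ::ₘ Δ) RuleTag.ax none none
  | axBot (c : Bool) (Γ Δ : Multiset Fml) :
      Rules c (Fml.bot ::ₘ Γ, Δ) RuleTag.axBot none none
  | impL (c : Bool) (Γ Δ : Multiset Fml) (A B : Fml) :
      Rules c (Fml.imp A B ::ₘ Γ, Δ) RuleTag.impL
        (some (B ::ₘ Γ, Δ)) (some (Γ, A ::ₘ Δ))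
  | impR (c : Bool) (Γ Δ : Multiset Fml) (A B : Fml) :
      Rules c (Γ, Fml.imp A B ::ₘ Δ) RuleTag.impR
        (some (A ::ₘ Γ, B ::ₘ Δ)) none
  | refl (c : Bool) (Γ Δ : Multiset Fml) (B : Fml) :
      Rules c (Fml.box B ::ₘ Γ, Δ) RuleTag.refl
        (some (B ::ₘ Fml.box B ::ₘ Γ, Δ)) none
  | box (c : Bool) (Γ Φ Δ : Multiset Fml) (A : Fml) :
      Rules c (Γ + Φ.map Fml.box, Fml.box A ::ₘ Δ) RuleTag.box
        (some (Γ + Φ.map Fml.box, A ::ₘ Δ)) (some (Φ.map Fml.box, ({A} : Multiset Fml)))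
  | cut (Γ Δ : Multiset Fml) (A : Fml) :
      Rules true (Γ, Δ) RuleTag.cut (some (Γ, A ::ₘ Δ)) (some (A ::ₘ Γ, Δ))

/-- An ∞-proof in `Grz_∞` (`c = false`) or `Grz_∞ + cut` (`c = true`): a
possibly infinite tree (nodes are adressed by lists of Booleans, `false`
pointing to the first premise and `true` to the second premise) of sequents
together with applied rules, constructed according to the rules, whose leaves
are initial sequents, and in which every infinite branch passes through a
right premise of the rule `(□)` infinitely many times. -/
structure InfProof (c : Bool) : Type where
  node : List Bool → Option (Sequent × RuleTag)
  root_isSome : (node []).isSome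
  closed : ∀ (p : List Bool) (i : Bool), node p = none → node (p ++ [i]) = none
  correct : ∀ (p : List Bool) (s : Sequent) (r : RuleTag), node p = some (s, r) →
    Rules c s r ((node (p ++ [false])).map Prod.fst) ((node (p ++ [true])).map Prod.fst)
  guard : ∀ f : ℕ → Bool, (∀ n : ℕ, (node ((List.range n).map f)).isSome) →
    ∀ N : ℕ, ∃ n : ℕ, N ≤ n ∧ f n = true ∧
      (node ((List.range n).map f)).map Prod.snd = some RuleTag.box

/-- The sequent at the root of an ∞-proof. -/
def rootSeq {c : Bool} (π : InfProof c) : Sequent :=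
  ((π.node []).getD (((0 : Multiset Fml), (0 : Multiset Fml)), RuleTag.ax)).1

/-- A sequent is provable in `Grz_∞ (+ cut)` if it has an ∞-proof with that
sequent at the root. -/
def ProvableInf (c : Bool) (s : Sequent) : Prop := ∃ π : InfProof c, rootSeq π = s

/-- The number of right premises of the rule `(□)` strictly below the node
addressed by `p` in the ∞-proof `π`. -/
def countBR {c : Bool} (π : InfProof c) (p : List Bool) : ℕ :=
  ((List.range p.length).filter fun i =>
    p.getD i false && decide ((π.node (p.take i)).map Prod.snd = some RuleTag.box)).length

/-- `Frag n π τ` means that the `n`-fragments of `π` and `τ` coincide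
(`π ∼_n τ`): the trees agree on every node lying strictly before the `n`-th
right premise of `(□)` on its branch. -/
def Frag {c : Bool} (n : ℕ) (π τ : InfProof c) : Prop :=
  ∀ p : List Bool, countBR π p < n → π.node p = τ.node p

/-- The local pheight `|π|`: the length of the longest branch in the main
(1-)fragment of `π`. -/
noncomputable def pheight {c : Bool} (π : InfProof c) : ℕ :=
  sSup { n : ℕ | ∃ p : List Bool, p.length = n ∧ (π.node p).isSome ∧ countBR π p = 0 }

/-- Membership in `P_n`: the ∞-proof contains no applications of the cut rule
in its `n`-fragment. -/
def CutFreeIn {c : Bool} (n : ℕ) (π : InfProof c) : Prop :=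
  ∀ p : List Bool, countBR π p < n → (π.node p).map Prod.snd ≠ some RuleTag.cut

/-- A non-expansive mapping on ∞-proofs. -/
def NonExp {c : Bool} (u : InfProof c → InfProof c) : Prop :=
  ∀ (n : ℕ) (π π' : InfProof c), Frag n π π' → Frag n (u π) (u π')

/-- An adequate mapping on ∞-proofs: it preserves each `P_n`. -/
def Adequate {c : Bool} (u : InfProof c → InfProof c) : Prop :=
  ∀ (n : ℕ) (π : InfProof c), CutFreeIn n π → CutFreeIn n (u π)


/-! ### Auxiliary development -/

/-- `□(A → □A)` -/
def st (A : Fml) : Fml := Fml.box (Fml.imp A (Fml.box A))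

/-- `Λ*` for a multiset `Λ`. -/
def starM (m : Multiset Fml) : Multiset Fml := m.map st

lemma gz {c : Bool} {Γ Δ Γ' Δ' : Multiset Fml} (h : GrzSeq c (Γ, Δ))
    (e1 : Γ = Γ') (e2 : Δ = Δ') : GrzSeq c (Γ', Δ') := by subst e1; subst e2; exact h

/-- Weakening is admissible. -/
lemma wk {c : Bool} : ∀ {s : Sequent}, GrzSeq c s → ∀ (Γ' Δ' : Multiset Fml),
    GrzSeq c (s.1 + Γ', s.2 + Δ') := by
  intro s h
  induction h with
  | ax c Γ Δ A =>
      intro Γ' Δ'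
      simpa only [Multiset.cons_add] using GrzSeq.ax c (Γ + Γ') (Δ + Δ') A
  | axBot c Γ Δ =>
      intro Γ' Δ'
      simpa only [Multiset.cons_add] using GrzSeq.axBot c (Γ + Γ') (Δ + Δ')
  | impL h1 h2 ih1 ih2 =>
      intro Γ' Δ'
      have i1 := ih1 Γ' Δ'
      have i2 := ih2 Γ' Δ'
      simp only [Multiset.cons_add] at i1 i2 ⊢
      exact GrzSeq.impL i1 i2
  | impR h1 ih1 =>
      intro Γ' Δ'
      have i1 := ih1 Γ' Δ'
      simp only [Multiset.cons_add] at i1 ⊢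
      exact GrzSeq.impR i1
  | refl h1 ih1 =>
      intro Γ' Δ'
      have i1 := ih1 Γ' Δ'
      simp only [Multiset.cons_add] at i1 ⊢
      exact GrzSeq.refl i1
  | boxGrz Γ Δ h1 ih1 =>
      intro Γ' Δ'
      refine gz (GrzSeq.boxGrz (Γ + Γ') (Δ + Δ') h1) ?_ ?_ <;>
        (simp only [Multiset.cons_add, ← Multiset.singleton_add]; abel)
  | cut h1 h2 ih1 ih2 =>
      intro Γ' Δ'
      have i1 := ih1 Γ' Δ'
      have i2 := ih2 Γ' Δ'
      simp only [Multiset.cons_add] at i1 i2 ⊢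
      exact GrzSeq.cut i1 i2

lemma ax_mem {c : Bool} {Γ Δ : Multiset Fml} {A : Fml} (h1 : A ∈ Γ) (h2 : A ∈ Δ) :
    GrzSeq c (Γ, Δ) :=
  gz (GrzSeq.ax c (Γ.erase A) (Δ.erase A) A) (Multiset.cons_erase h1) (Multiset.cons_erase h2)

lemma axBot_mem {c : Bool} {Γ : Multiset Fml} (Δ : Multiset Fml) (h1 : Fml.bot ∈ Γ) :
    GrzSeq c (Γ, Δ) :=
  gz (GrzSeq.axBot c (Γ.erase Fml.bot) Δ) (Multiset.cons_erase h1) rfl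

/-- Subformulas of a formula. -/
def Fml.subs : Fml → Finset Fml
  | .bot => {.bot}
  | .var n => {.var n}
  | .imp A B => insert (.imp A B) (A.subs ∪ B.subs)
  | .box A => insert (.box A) A.subs

lemma subs_self (A : Fml) : A ∈ A.subs := by
  cases A <;> simp [Fml.subs]

lemma subs_trans : ∀ {A B : Fml}, B ∈ A.subs → B.subs ⊆ A.subs := by
  intro A
  induction A with
  | bot => intro B h; simp [Fml.subs] at h; subst h; exact fun x hx => hx
  | var n => intro B h; simp [Fml.subs] at h; subst h; exact fun x hx => hx
  | imp A1 A2 ih1 ih2 =>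
      intro B h
      simp only [Fml.subs, Finset.mem_insert, Finset.mem_union] at h
      rcases h with h | h | h
      · subst h; exact fun x hx => hx
      · exact (ih1 h).trans ((Finset.subset_union_left).trans (Finset.subset_insert _ _))
      · exact (ih2 h).trans ((Finset.subset_union_right).trans (Finset.subset_insert _ _))
  | box A1 ih1 =>
      intro B h
      simp only [Fml.subs, Finset.mem_insert] at h
      rcases h with h | h
      · subst h; exact fun x hx => hx
      · exact (ih1 h).trans (Finset.subset_insert _ _)

/-- All formulas of the sequent have their subformulas inside `S`. -/
def SeqIn (s : Sequent) (S : Finset Fml) : Prop :=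
  (∀ A ∈ s.1, A.subs ⊆ S) ∧ (∀ A ∈ s.2, A.subs ⊆ S)

lemma rules_seqIn {s : Sequent} {r : RuleTag} {o1 o2 : Option Sequent}
    (h : Rules false s r o1 o2) {S : Finset Fml} (hs : SeqIn s S) :
    ∀ t : Sequent, o1 = some t ∨ o2 = some t → SeqIn t S := by
  obtain ⟨hl, hr⟩ := hs
  cases h with
  | ax c Γ Δ p =>
      intro t ht; rcases ht with ht | ht <;> exact absurd ht (by simp)
  | axBot c Γ Δ =>
      intro t ht; rcases ht with ht | ht <;> exact absurd ht (by simp)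
  | impL c Γ Δ A B =>
      intro t ht
      have hAB := hl _ (Multiset.mem_cons_self _ _)
      rcases ht with ht | ht <;> cases Option.some.inj ht
      · refine ⟨fun C hC => ?_, hr⟩
        rcases Multiset.mem_cons.1 hC with rfl | hC
        · exact (subs_trans (by simp [Fml.subs, subs_self])).trans hAB
        · exact hl _ (Multiset.mem_cons_of_mem hC)
      · refine ⟨fun C hC => hl _ (Multiset.mem_cons_of_mem hC), fun C hC => ?_⟩
        rcases Multiset.mem_cons.1 hC with rfl | hC
        · exact (subs_trans (by simp [Fml.subs, subs_self])).trans hAB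
        · exact hr _ hC
  | impR c Γ Δ A B =>
      intro t ht
      have hAB := hr _ (Multiset.mem_cons_self _ _)
      rcases ht with ht | ht
      case inr => exact absurd ht (by simp)
      cases Option.some.inj ht
      refine ⟨fun C hC => ?_, fun C hC => ?_⟩
      · rcases Multiset.mem_cons.1 hC with rfl | hC
        · exact (subs_trans (by simp [Fml.subs, subs_self])).trans hAB
        · exact hl _ hC
      · rcases Multiset.mem_cons.1 hC with rfl | hC
        · exact (subs_trans (by simp [Fml.subs, subs_self])).trans hAB
        · exact hr _ (Multiset.mem_cons_of_mem hC)
  | refl c Γ Δ B =>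
      intro t ht
      have hB := hl _ (Multiset.mem_cons_self _ _)
      rcases ht with ht | ht
      case inr => exact absurd ht (by simp)
      cases Option.some.inj ht
      refine ⟨fun C hC => ?_, hr⟩
      rcases Multiset.mem_cons.1 hC with rfl | hC
      · exact (subs_trans (by simp [Fml.subs, subs_self])).trans hB
      · rcases Multiset.mem_cons.1 hC with rfl | hC
        · exact hB
        · exact hl _ (Multiset.mem_cons_of_mem hC)
  | box c Γ Φ Δ A =>
      intro t ht
      have hA := hr _ (Multiset.mem_cons_self _ _)
      rcases ht with ht | ht <;> cases Option.some.inj ht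
      · refine ⟨hl, fun C hC => ?_⟩
        rcases Multiset.mem_cons.1 hC with rfl | hC
        · exact (subs_trans (by simp [Fml.subs, subs_self])).trans hA
        · exact hr _ (Multiset.mem_cons_of_mem hC)
      · refine ⟨fun C hC => hl _ (Multiset.mem_add.2 (Or.inr hC)), fun C hC => ?_⟩
        rcases Multiset.mem_singleton.1 hC with rfl
        exact (subs_trans (by simp [Fml.subs, subs_self])).trans hA

lemma anc_isSome {c : Bool} (π : InfProof c) :
    ∀ (q p : List Bool), (π.node (p ++ q)).isSome → (π.node p).isSome := by
  intro q
  induction q using List.reverseRecOn with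
  | nil => intro p h; simpa using h
  | append_singleton q i ih =>
      intro p h
      rw [← List.append_assoc] at h
      apply ih
      by_contra hc
      rw [Option.not_isSome_iff_eq_none] at hc
      rw [π.closed _ i hc] at h
      simp at h

lemma nodes_in (π : InfProof false) (S : Finset Fml) {s₀ : Sequent} {r₀ : RuleTag}
    (hroot : π.node [] = some (s₀, r₀)) (h₀ : SeqIn s₀ S) :
    ∀ (p : List Bool) (s : Sequent) (r : RuleTag), π.node p = some (s, r) → SeqIn s S := by
  intro p
  induction p using List.reverseRecOn with
  | nil =>
      intro s r h
      rw [hroot] at h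
      cases Option.some.inj h
      exact h₀
  | append_singleton q i ih =>
      intro s r h
      have hq : (π.node q).isSome := anc_isSome π [i] q (by rw [h]; simp)
      obtain ⟨⟨s', r'⟩, hq'⟩ := Option.isSome_iff_exists.1 hq
      have hrule := π.correct q s' r' hq'
      have hin := ih s' r' hq'
      cases i with
      | false =>
          refine rules_seqIn hrule hin s (Or.inl ?_)
          rw [h]; rfl
      | true =>
          refine rules_seqIn hrule hin s (Or.inr ?_)
          rw [h]; rfl

/-- Key derivation for the `(□)` rule when `A` already has its Grz-axiom
available in the context (case `A ∈ Λ`). -/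
lemma box_old {c : Bool} {M Δ : Multiset Fml} {A : Fml}
    (h : GrzSeq c (st A ::ₘ M, A ::ₘ Δ)) : GrzSeq c (st A ::ₘ M, Fml.box A ::ₘ Δ) := by
  show GrzSeq c (Fml.box (Fml.imp A (Fml.box A)) ::ₘ M, Fml.box A ::ₘ Δ)
  apply GrzSeq.refl
  apply GrzSeq.impL
  · exact GrzSeq.ax c _ _ (Fml.box A)
  · have h2 := wk h 0 {Fml.box A}
    refine gz h2 (by simp [st]) ?_
    simp only [← Multiset.singleton_add]
    abel

/-- Key derivation for the `(□)` rule in the case `A ∉ Λ`. -/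
lemma box_new {c : Bool} (Λm Γ Φ Δ : Multiset Fml) (A : Fml)
    (h : GrzSeq c (st A ::ₘ (starM Λm + Φ.map Fml.box), ({A} : Multiset Fml))) :
    GrzSeq c (starM Λm + (Γ + Φ.map Fml.box), Fml.box A ::ₘ Δ) := by
  have e : (Λm.map (fun B => Fml.imp B (Fml.box B)) + Φ).map Fml.box
      = starM Λm + Φ.map Fml.box := by
    simp [Multiset.map_map, starM, st, Function.comp]; rfl
  have h' : GrzSeq c (Fml.box (Fml.imp A (Fml.box A)) ::ₘ
      (Λm.map (fun B => Fml.imp B (Fml.box B)) + Φ).map Fml.box, ({A} : Multiset Fml)) := by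
    rw [e]; exact h
  have h2 := GrzSeq.boxGrz (c := c) Γ Δ h'
  refine gz h2 ?_ rfl
  rw [e]
  abel

lemma main (π : InfProof false) (S : Finset Fml)
    (hS : ∀ (p : List Bool) (s : Sequent) (r : RuleTag),
      π.node p = some (s, r) → SeqIn s S) :
    ∀ (k : ℕ) (Λ : Finset Fml), (S \ Λ).card = k →
      ∀ (p : List Bool) (sr : Sequent × RuleTag), π.node p = some sr →
        GrzSeq false (starM Λ.val + sr.1.1, sr.1.2) := by
  intro k
  induction k using Nat.strong_induction_on with
  | _ k IH =>
  intro Λ hk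
  by_contra hcon
  push_neg at hcon
  obtain ⟨p₀, sr₀, hn₀, hb₀⟩ := hcon
  classical
  set Bad : List Bool → Prop := fun p => ∃ sr : Sequent × RuleTag,
    π.node p = some sr ∧ ¬ GrzSeq false (starM Λ.val + sr.1.1, sr.1.2) with hBadDef
  have step : ∀ p, Bad p → ∃ i, Bad (p ++ [i]) ∧
      ((π.node p).map Prod.snd = some RuleTag.box → i = false) := by
    intro p hp
    obtain ⟨⟨s, r⟩, hn, hb⟩ := hp
    have hrule := π.correct p s r hn
    obtain ⟨o1, ho1⟩ : ∃ o, (π.node (p ++ [false])).map Prod.fst = o := ⟨_, rfl⟩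
    obtain ⟨o2, ho2⟩ : ∃ o, (π.node (p ++ [true])).map Prod.fst = o := ⟨_, rfl⟩
    rw [ho1, ho2] at hrule
    cases hrule with
    | ax c Γ Δ q =>
        exact absurd (ax_mem (Multiset.mem_add.2 (Or.inr (Multiset.mem_cons_self _ _)))
          (Multiset.mem_cons_self _ _)) hb
    | axBot c Γ Δ =>
        exact absurd (axBot_mem _ (Multiset.mem_add.2 (Or.inr (Multiset.mem_cons_self _ _)))) hb
    | impL c Γ Δ A B =>
        obtain ⟨⟨t1, r1⟩, hn1, hf1⟩ := Option.map_eq_some_iff.1 ho1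
        obtain ⟨⟨t2, r2⟩, hn2, hf2⟩ := Option.map_eq_some_iff.1 ho2
        simp only at hf1 hf2
        subst hf1; subst hf2
        by_cases hg1 : GrzSeq false (starM Λ.val + (B ::ₘ Γ), Δ)
        · by_cases hg2 : GrzSeq false (starM Λ.val + Γ, A ::ₘ Δ)
          · exfalso
            apply hb
            refine gz (GrzSeq.impL (gz hg1 (Multiset.add_cons _ _ _) rfl) hg2)
              (Multiset.add_cons _ _ _).symm rfl
          · exact ⟨true, ⟨_, hn2, hg2⟩, fun hcontra => by rw [hn] at hcontra; simp at hcontra⟩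
        · exact ⟨false, ⟨_, hn1, hg1⟩, fun _ => rfl⟩
    | impR c Γ Δ A B =>
        obtain ⟨⟨t1, r1⟩, hn1, hf1⟩ := Option.map_eq_some_iff.1 ho1
        simp only at hf1
        subst hf1
        by_cases hg1 : GrzSeq false (starM Λ.val + (A ::ₘ Γ), B ::ₘ Δ)
        · exfalso
          apply hb
          exact gz (GrzSeq.impR (gz hg1 (Multiset.add_cons _ _ _) rfl)) rfl rfl
        · exact ⟨false, ⟨_, hn1, hg1⟩, fun _ => rfl⟩
    | refl c Γ Δ B =>
        obtain ⟨⟨t1, r1⟩, hn1, hf1⟩ := Option.map_eq_some_iff.1 ho1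
        simp only at hf1
        subst hf1
        by_cases hg1 : GrzSeq false (starM Λ.val + (B ::ₘ Fml.box B ::ₘ Γ), Δ)
        · exfalso
          apply hb
          refine gz (GrzSeq.refl (gz hg1 ?_ rfl)) (Multiset.add_cons _ _ _).symm rfl
          rw [Multiset.add_cons, Multiset.add_cons]
        · exact ⟨false, ⟨_, hn1, hg1⟩, fun _ => rfl⟩
    | box c Γ Φ Δ A =>
        by_cases hA : A ∈ Λ
        · -- case (a): `A ∈ Λ`
          obtain ⟨⟨t1, r1⟩, hn1, hf1⟩ := Option.map_eq_some_iff.1 ho1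
          simp only at hf1
          subst hf1
          refine ⟨false, ⟨_, hn1, fun hgood => hb ?_⟩, fun _ => rfl⟩
          have e0 : starM Λ.val = st A ::ₘ starM (Λ.val.erase A) := by
            conv_lhs => rw [← Multiset.cons_erase (Finset.mem_def.1 hA)]
            simp [starM]
          refine gz (box_old (gz hgood (by rw [e0, Multiset.cons_add]) rfl)) ?_ rfl
          rw [e0, Multiset.cons_add]
        · -- case (b): `A ∉ Λ`
          exfalso
          apply hb
          have hin := hS p _ _ hn
          have hAS : A ∈ S := by
            have h2 := hin.2 _ (Multiset.mem_cons_self _ _)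
            exact h2 (by simp [Fml.subs, subs_self])
          have hlt : (S \ insert A Λ).card < k := by
            rw [← hk]
            apply Finset.card_lt_card
            rw [Finset.ssubset_iff_of_subset
              (Finset.sdiff_subset_sdiff le_rfl (Finset.subset_insert _ _))]
            exact ⟨A, Finset.mem_sdiff.2 ⟨hAS, hA⟩, by simp⟩
          obtain ⟨⟨t2, r2⟩, hn2, hf2⟩ := Option.map_eq_some_iff.1 ho2
          simp only at hf2
          subst hf2
          have hprem := IH _ hlt (insert A Λ) rfl (p ++ [true]) _ hn2
          have e1 : (insert A Λ).val = A ::ₘ Λ.val := by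
            rw [Finset.insert_val, Multiset.ndinsert_of_notMem (fun h => hA (Finset.mem_def.2 h))]
          have e2 : starM (insert A Λ).val = st A ::ₘ starM Λ.val := by
            rw [e1]; simp [starM]
          apply box_new
          exact gz hprem (by rw [e2, Multiset.cons_add]) rfl
  -- build an infinite branch of bad nodes, never exiting a `(□)` node to the right
  choose bit hbitBad hbitBox using step
  let F : ℕ → {p : List Bool // Bad p} := fun n =>
    Nat.rec ⟨p₀, ⟨sr₀, hn₀, hb₀⟩⟩ (fun _ q => ⟨q.1 ++ [bit q.1 q.2], hbitBad q.1 q.2⟩) n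
  have hFsucc : ∀ n, (F (n + 1)).1 = (F n).1 ++ [bit (F n).1 (F n).2] := fun n => rfl
  have hFlen : ∀ n, (F n).1.length = p₀.length + n := by
    intro n
    induction n with
    | zero => rfl
    | succ n ih => rw [hFsucc, List.length_append, ih]; simp [Nat.add_assoc]
  have hFpre : ∀ m n, m ≤ n → (F m).1 <+: (F n).1 := by
    intro m n h
    induction n with
    | zero => cases Nat.le_zero.1 h; exact List.prefix_refl _
    | succ n ih =>
        rcases Nat.lt_or_ge m (n + 1) with h' | h'
        · exact (ih (Nat.lt_succ_iff.1 h')).trans ⟨[bit (F n).1 (F n).2], (hFsucc n).symm⟩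
        · have hmn : m = n + 1 := le_antisymm h h'
          cases hmn; exact List.prefix_refl _
  let f' : ℕ → Bool := fun n => (F (n + 1)).1.getD n false
  have hG : ∀ n, (List.range n).map f' = (F n).1.take n := by
    intro n
    induction n with
    | zero => simp
    | succ n ih =>
        rw [List.range_succ, List.map_append, ih]
        have hlen : n < (F (n + 1)).1.length := by have := hFlen (n + 1); omega
        have htake : (F (n + 1)).1.take n = (F n).1.take n := by
          obtain ⟨t, ht⟩ := hFpre n (n + 1) (Nat.le_succ n)
          rw [← ht, List.take_append_of_le_length (by have := hFlen n; omega)]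
        have hsucc : (F (n + 1)).1.take (n + 1)
            = (F (n + 1)).1.take n ++ [(F (n + 1)).1.getD n false] := by
          rw [List.getD_eq_getElem _ _ hlen, List.take_succ, List.getElem?_eq_getElem hlen]
          rfl
        rw [hsucc, htake]
        rfl
  have hGfull : ∀ m, (List.range (p₀.length + m)).map f' = (F m).1 := by
    intro m
    rw [hG]
    obtain ⟨t, ht⟩ := hFpre m (p₀.length + m) (by omega)
    rw [← ht, List.take_append_of_le_length (by have := hFlen m; omega),
      List.take_of_length_le (by have := hFlen m; omega)]
  have hsome : ∀ n, (π.node ((List.range n).map f')).isSome := by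
    intro n
    rw [hG]
    have hFn : (π.node (F n).1).isSome := by
      obtain ⟨sr, hsr, _⟩ := (F n).2
      rw [hsr]; rfl
    exact anc_isSome π ((F n).1.drop n) _ (by rw [List.take_append_drop]; exact hFn)
  obtain ⟨n, hnN, hftrue, hbox⟩ := π.guard f' hsome p₀.length
  obtain ⟨m, rfl⟩ : ∃ m, n = p₀.length + m := ⟨n - p₀.length, by omega⟩
  rw [hGfull] at hbox
  have hfalse := hbitBox (F m).1 (F m).2 hbox
  have hbit : f' (p₀.length + m) = bit (F m).1 (F m).2 := by
    show (F (p₀.length + m + 1)).1.getD (p₀.length + m) false = _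
    obtain ⟨t, ht⟩ := hFpre (m + 1) (p₀.length + m + 1) (by omega)
    rw [← ht, List.getD_append _ _ _ _ (by have := hFlen (m + 1); omega), hFsucc,
      List.getD_append_right _ _ _ _ (by have := hFlen m; omega)]
    have := hFlen m
    rw [show p₀.length + m - ((F m).1).length = 0 by omega]
    rfl
  rw [hbit, hfalse] at hftrue
  exact Bool.noConfusion hftrue

/-- If `Γ ⇒ Δ` is provable in `Grz_∞`, then for every finite set of formulas
`Λ` the sequent `Λ*, Γ ⇒ Δ` is provable in `Grz_Seq`, where
`Λ* = {□(A → □A) : A ∈ Λ}`. -/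
theorem grzInf_to_grzSeq_with_star (Γ Δ : Multiset Fml)
    (h : ProvableInf false (Γ, Δ)) (Λ : Finset Fml) :
    GrzSeq false (Λ.val.map (fun A => Fml.box (Fml.imp A (Fml.box A))) + Γ, Δ) := by
  obtain ⟨π, hroot⟩ := h
  obtain ⟨⟨s₀, r₀⟩, hn₀⟩ := Option.isSome_iff_exists.1 π.root_isSome
  have hs₀ : s₀ = (Γ, Δ) := by
    unfold rootSeq at hroot
    rw [hn₀] at hroot
    exact hroot
  subst hs₀
  set S : Finset Fml := (Γ.toFinset ∪ Δ.toFinset).biUnion Fml.subs with hSdef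
  have h₀ : SeqIn (Γ, Δ) S := by
    constructor
    · intro A hA
      exact Finset.subset_biUnion_of_mem _ (Finset.mem_union_left _ (Multiset.mem_toFinset.2 hA))
    · intro A hA
      exact Finset.subset_biUnion_of_mem _ (Finset.mem_union_right _ (Multiset.mem_toFinset.2 hA))
  have hS := nodes_in π S hn₀ h₀
  have hmain := main π S hS _ Λ rfl [] ((Γ, Δ), r₀) hn₀
  exact hmain
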